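/- For every integer k ≥ 2, the joint law μ_k of two consecutive states (X_k, X_{k+1}) of the Kendall random walk with α = 1 and unit step δ_1 assigns to the diagonal the mass μ_k({(u,v) ∈ ℝ² : u = v}) = (k−1)/(k+1). -/

import Mathlib

open MeasureTheory Set

/-- The Pareto probability measure `π_2`, with density `2 x⁻³ 1_{(1,∞)}(x)`. -/
noncomputable def pareto2 : Measure ℝ :=
  volume.withDensity (fun x => ENNReal.ofReal (if 1 < x then 2 / x ^ 3 else 0))

/-- The distribution `λ_k = δ_1^{△_1 k}` of the state `X_k` of the Kendall random walk
(`α = 1`, unit step `δ_1`), with density `k (k-1) x⁻³ (1 - 1/x)^(k-2) 1_{(1,∞)}(x)`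
for `k ≥ 2`. -/
noncomputable def lamK (k : ℕ) : Measure ℝ :=
  volume.withDensity (fun x => ENNReal.ofReal
    (if 1 < x then (k : ℝ) * ((k : ℝ) - 1) / x ^ 3 * (1 - 1 / x) ^ (k - 2) else 0))

/-- The one-step transition kernel `K(u, ·) = u⁻¹ (T_u π_2) + (1 - u⁻¹) δ_u` of the
Kendall random walk with `α = 1` and unit step `δ_1`. -/
noncomputable def kendallStep (u : ℝ) : Measure ℝ :=
  ENNReal.ofReal u⁻¹ • Measure.map (fun x => u * x) pareto2
    + ENNReal.ofReal (1 - u⁻¹) • Measure.dirac u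

/-- The joint law `μ_k = λ_k ⊗ K` of two consecutive states `(X_k, X_{k+1})`:
`μ_k(C) = ∫ K(u, {v : (u,v) ∈ C}) λ_k(du)`. -/
noncomputable def jointLaw (k : ℕ) : Measure (ℝ × ℝ) :=
  (lamK k).bind (fun u => (kendallStep u).map (fun v => (u, v)))

instance : SFinite pareto2 := by unfold pareto2; infer_instance

lemma pareto2_singleton (a : ℝ) : pareto2 {a} = 0 := by
  rw [pareto2, withDensity_apply _ (measurableSet_singleton a)]
  exact setLIntegral_measure_zero _ _ (Real.volume_singleton)

lemma measurable_kernelMap :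
    Measurable (fun u : ℝ => (kendallStep u).map (fun v => (u, v))) := by
  apply Measure.measurable_of_measurable_coe
  intro s hs
  have key : ∀ u : ℝ, ((kendallStep u).map (fun v => (u, v))) s
      = ENNReal.ofReal u⁻¹ * ∫⁻ x, s.indicator (fun _ => (1 : ENNReal)) (u, u * x) ∂pareto2
        + ENNReal.ofReal (1 - u⁻¹) * s.indicator (fun _ => (1 : ENNReal)) (u, u) := by
    intro u
    have hmk : Measurable (fun v : ℝ => (u, v)) := measurable_const.prodMk measurable_id
    rw [Measure.map_apply hmk hs]
    have hpre : MeasurableSet ((fun v : ℝ => (u, v)) ⁻¹' s) := hmk hs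
    rw [kendallStep, Measure.add_apply, Measure.smul_apply, Measure.smul_apply,
      Measure.map_apply (measurable_const_mul u) hpre, Measure.dirac_apply' _ hpre]
    have h1 : ((fun x : ℝ => u * x) ⁻¹' ((fun v : ℝ => (u, v)) ⁻¹' s))
        = (fun x : ℝ => (u, u * x)) ⁻¹' s := rfl
    have h2 : pareto2 ((fun x : ℝ => (u, u * x)) ⁻¹' s)
        = ∫⁻ x, s.indicator (fun _ => (1 : ENNReal)) (u, u * x) ∂pareto2 := by
      have hmeas : MeasurableSet ((fun x : ℝ => (u, u * x)) ⁻¹' s) :=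
        (measurable_const.prodMk (measurable_const_mul u)) hs
      rw [← setLIntegral_one, ← lintegral_indicator hmeas]
      exact lintegral_congr fun x => by
        by_cases hx : (u, u * x) ∈ s <;>
          simp [Set.indicator_apply, hx, Set.mem_preimage]
    have h3 : ((fun v : ℝ => (u, v)) ⁻¹' s).indicator (1 : ℝ → ENNReal) u
        = s.indicator (fun _ => (1 : ENNReal)) (u, u) := by
      by_cases hx : (u, u) ∈ s <;> simp [Set.indicator_apply, hx, Set.mem_preimage]
    simp only [smul_eq_mul]
    rw [h1, h2, h3]
  simp only [key]
  apply Measurable.add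
  · apply Measurable.mul
    · exact ENNReal.measurable_ofReal.comp measurable_inv
    · have hF : Measurable (fun p : ℝ × ℝ =>
          s.indicator (fun _ => (1 : ENNReal)) (p.1, p.1 * p.2)) :=
        (measurable_one.indicator hs).comp
          (measurable_fst.prodMk (measurable_fst.mul measurable_snd))
      exact hF.lintegral_prod_right'
  · apply Measurable.mul
    · exact ENNReal.measurable_ofReal.comp (measurable_const.sub measurable_inv)
    · exact (measurable_one.indicator hs).comp (measurable_id.prodMk measurable_id)

lemma lamK_ae_gt_one (k : ℕ) : ∀ᵐ u ∂(lamK k), 1 < u := by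
  rw [ae_iff]
  have hset : {u : ℝ | ¬ 1 < u} = Iic 1 := by ext u; simp [not_lt]
  rw [hset, lamK, withDensity_apply _ measurableSet_Iic]
  rw [setLIntegral_congr_fun measurableSet_Iic
    ((fun x hx => by
      simp only [mem_Iic] at hx
      rw [if_neg (not_lt.mpr hx), ENNReal.ofReal_zero]))]
  simp

lemma hasDerivAt_aux (k : ℕ) (hk : 2 ≤ k) {u : ℝ} (hu : u ≠ 0) :
    HasDerivAt (fun u : ℝ => ((k : ℝ) - 1) * (1 - 1 / u) ^ k
        - ((k : ℝ) * ((k : ℝ) - 1) / ((k : ℝ) + 1)) * (1 - 1 / u) ^ (k + 1))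
      ((k : ℝ) * ((k : ℝ) - 1) / u ^ 3 * (1 - 1 / u) ^ (k - 1)) u := by
  have hbase : HasDerivAt (fun u : ℝ => 1 - 1 / u) (1 / u ^ 2) u := by
    have h := (hasDerivAt_inv hu).const_sub 1
    simpa [one_div] using h
  have h1 : HasDerivAt (fun u : ℝ => (1 - 1 / u) ^ k)
      ((k : ℝ) * (1 - 1 / u) ^ (k - 1) * (1 / u ^ 2)) u := hbase.pow k
  have h2 : HasDerivAt (fun u : ℝ => (1 - 1 / u) ^ (k + 1))
      (((k : ℝ) + 1) * (1 - 1 / u) ^ k * (1 / u ^ 2)) u := by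
    have := hbase.pow (k + 1)
    rw [Nat.add_sub_cancel, Nat.cast_add, Nat.cast_one] at this
    exact this
  have h := (h1.const_mul ((k : ℝ) - 1)).sub
    (h2.const_mul ((k : ℝ) * ((k : ℝ) - 1) / ((k : ℝ) + 1)))
  refine h.congr_deriv ?_
  have hk1 : ((k : ℝ) + 1) ≠ 0 := by positivity
  have hpow : (1 - 1 / u) ^ k = (1 - 1 / u) ^ (k - 1) * (1 - 1 / u) := by
    rw [← pow_succ]
    congr 1
    omega
  rw [hpow]
  field_simp
  ring

lemma integrableOn_aux (k : ℕ) (hk : 2 ≤ k) :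
    IntegrableOn (fun u : ℝ => (k : ℝ) * ((k : ℝ) - 1) / u ^ 3 * (1 - 1 / u) ^ (k - 1))
      (Ioi 1) := by
  have hmaj : IntegrableOn (fun u : ℝ => (k : ℝ) * ((k : ℝ) - 1) * u ^ (-3 : ℝ)) (Ioi 1) :=
    (integrableOn_Ioi_rpow_of_lt (by norm_num) one_pos).const_mul _
  apply hmaj.mono'
  · apply AEStronglyMeasurable.mul
    · exact (measurable_const.div (measurable_id.pow_const 3)).aestronglyMeasurable
    · exact ((measurable_const.sub (measurable_const.div measurable_id)).pow_const
        _).aestronglyMeasurable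
  · rw [ae_restrict_iff' measurableSet_Ioi]
    apply Filter.Eventually.of_forall
    intro u hu
    simp only [mem_Ioi] at hu
    have hu0 : (0 : ℝ) < u := lt_trans one_pos hu
    have h1 : (0 : ℝ) ≤ 1 - 1 / u := by
      rw [sub_nonneg, div_le_one hu0]
      linarith
    have h2 : 1 - 1 / u ≤ 1 := by
      have : 0 < 1 / u := by positivity
      linarith
    have hkk : (0 : ℝ) ≤ (k : ℝ) * ((k : ℝ) - 1) := by
      have : (2 : ℝ) ≤ (k : ℝ) := by exact_mod_cast hk
      nlinarith
    rw [Real.norm_eq_abs, abs_of_nonneg (by positivity)]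
    have hpow : (1 - 1 / u) ^ (k - 1) ≤ 1 := pow_le_one₀ h1 h2
    have hrpow : u ^ (-3 : ℝ) = 1 / u ^ 3 := by
      rw [Real.rpow_neg hu0.le, ← Real.rpow_natCast u 3]
      norm_num
    calc (k : ℝ) * ((k : ℝ) - 1) / u ^ 3 * (1 - 1 / u) ^ (k - 1)
        ≤ (k : ℝ) * ((k : ℝ) - 1) / u ^ 3 * 1 := by
          apply mul_le_mul_of_nonneg_left hpow (by positivity)
      _ = (k : ℝ) * ((k : ℝ) - 1) * u ^ (-3 : ℝ) := by rw [hrpow]; ring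

lemma integral_aux (k : ℕ) (hk : 2 ≤ k) :
    ∫ u in Ioi (1 : ℝ), (k : ℝ) * ((k : ℝ) - 1) / u ^ 3 * (1 - 1 / u) ^ (k - 1)
      = ((k : ℝ) - 1) / ((k : ℝ) + 1) := by
  set F : ℝ → ℝ := fun u => ((k : ℝ) - 1) * (1 - 1 / u) ^ k
      - ((k : ℝ) * ((k : ℝ) - 1) / ((k : ℝ) + 1)) * (1 - 1 / u) ^ (k + 1) with hF
  have hk1 : ((k : ℝ) + 1) ≠ 0 := by positivity
  have hcont : ContinuousWithinAt F (Ici 1) 1 :=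
    (hasDerivAt_aux k hk one_ne_zero).continuousAt.continuousWithinAt
  have hderiv : ∀ x ∈ Ioi (1 : ℝ),
      HasDerivAt F ((k : ℝ) * ((k : ℝ) - 1) / x ^ 3 * (1 - 1 / x) ^ (k - 1)) x :=
    fun x hx => hasDerivAt_aux k hk (by simp only [mem_Ioi] at hx; linarith)
  have hlim : Filter.Tendsto F Filter.atTop
      (nhds (((k : ℝ) - 1) - ((k : ℝ) * ((k : ℝ) - 1) / ((k : ℝ) + 1)))) := by
    have h0 : Filter.Tendsto (fun u : ℝ => 1 / u) Filter.atTop (nhds (0 : ℝ)) := by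
      simpa [one_div] using tendsto_inv_atTop_zero (𝕜 := ℝ)
    have hbase : Filter.Tendsto (fun u : ℝ => 1 - 1 / u) Filter.atTop (nhds (1 : ℝ)) := by
      have := (tendsto_const_nhds :
        Filter.Tendsto (fun _ : ℝ => (1 : ℝ)) Filter.atTop (nhds 1)).sub h0
      rwa [sub_zero] at this
    have h1 : Filter.Tendsto (fun u : ℝ => (1 - 1 / u) ^ k) Filter.atTop (nhds (1 : ℝ)) := by
      have := hbase.pow k; rwa [one_pow] at this
    have h2 : Filter.Tendsto (fun u : ℝ => (1 - 1 / u) ^ (k + 1)) Filter.atTop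
        (nhds (1 : ℝ)) := by
      have := hbase.pow (k + 1); rwa [one_pow] at this
    have hcomb := (h1.const_mul ((k : ℝ) - 1)).sub
      (h2.const_mul ((k : ℝ) * ((k : ℝ) - 1) / ((k : ℝ) + 1)))
    have heq : ((k : ℝ) - 1) * 1 - ((k : ℝ) * ((k : ℝ) - 1) / ((k : ℝ) + 1)) * 1
        = ((k : ℝ) - 1) - ((k : ℝ) * ((k : ℝ) - 1) / ((k : ℝ) + 1)) := by ring
    rw [hF, ← heq]
    exact hcomb
  have := integral_Ioi_of_hasDerivAt_of_tendsto hcont hderiv (integrableOn_aux k hk) hlim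
  rw [this]
  have hF1 : F 1 = 0 := by
    have hk0 : k ≠ 0 := by omega
    simp [hF, zero_pow hk0]
  rw [hF1, sub_zero]
  field_simp
  ring

/-- For every `k ≥ 2`, the joint law `μ_k` of two consecutive states `(X_k, X_{k+1})` of
the Kendall random walk (`α = 1`, unit step `δ_1`) gives the diagonal mass `(k-1)/(k+1)`. -/
theorem jointLaw_diagonal (k : ℕ) (hk : 2 ≤ k) :
    jointLaw k {p : ℝ × ℝ | p.1 = p.2} = ENNReal.ofReal (((k : ℝ) - 1) / ((k : ℝ) + 1)) := by
  have hdiag : MeasurableSet {p : ℝ × ℝ | p.1 = p.2} :=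
    measurableSet_eq_fun measurable_fst measurable_snd
  rw [jointLaw, Measure.bind_apply hdiag measurable_kernelMap.aemeasurable]
  -- pointwise value of the kernel on the diagonal, a.e.
  have hker : ∀ᵐ u ∂(lamK k), ((kendallStep u).map (fun v => (u, v))) {p : ℝ × ℝ | p.1 = p.2}
      = ENNReal.ofReal (1 - u⁻¹) := by
    filter_upwards [lamK_ae_gt_one k] with u hu
    have hu0 : u ≠ 0 := by linarith
    have hmk : Measurable (fun v : ℝ => (u, v)) := measurable_const.prodMk measurable_id
    rw [Measure.map_apply hmk hdiag]
    have hpre : (fun v : ℝ => (u, v)) ⁻¹' {p : ℝ × ℝ | p.1 = p.2} = {u} := by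
      ext v; simp [eq_comm]
    rw [hpre, kendallStep, Measure.add_apply, Measure.smul_apply, Measure.smul_apply,
      Measure.map_apply (measurable_const_mul u) (measurableSet_singleton u),
      Measure.dirac_apply_of_mem (mem_singleton u)]
    have hpre2 : (fun x : ℝ => u * x) ⁻¹' {u} = {1} := by
      ext x
      simp only [mem_preimage, mem_singleton_iff]
      constructor
      · intro h
        have : u * x = u * 1 := by linarith [h]
        exact mul_left_cancel₀ hu0 this
      · rintro rfl; ring
    rw [hpre2, pareto2_singleton]
    simp
  rw [lintegral_congr_ae hker, lamK]
  have hdens : Measurable (fun x : ℝ => ENNReal.ofReal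
      (if 1 < x then (k : ℝ) * ((k : ℝ) - 1) / x ^ 3 * (1 - 1 / x) ^ (k - 2) else 0)) := by
    apply ENNReal.measurable_ofReal.comp
    apply Measurable.ite measurableSet_Ioi
    · exact (measurable_const.div (measurable_id.pow_const 3)).mul
        ((measurable_const.sub (measurable_const.div measurable_id)).pow_const _)
    · exact measurable_const
  have hg : Measurable (fun u : ℝ => ENNReal.ofReal (1 - u⁻¹)) :=
    ENNReal.measurable_ofReal.comp (measurable_const.sub measurable_inv)
  rw [lintegral_withDensity_eq_lintegral_mul _ hdens hg]
  have hpt : ∀ u : ℝ, ((fun x : ℝ => ENNReal.ofReal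
        (if 1 < x then (k : ℝ) * ((k : ℝ) - 1) / x ^ 3 * (1 - 1 / x) ^ (k - 2) else 0))
        * (fun u : ℝ => ENNReal.ofReal (1 - u⁻¹))) u
      = (Ioi (1 : ℝ)).indicator (fun u =>
          ENNReal.ofReal ((k : ℝ) * ((k : ℝ) - 1) / u ^ 3 * (1 - 1 / u) ^ (k - 1))) u := by
    intro u
    simp only [Pi.mul_apply]
    by_cases hu : 1 < u
    · rw [if_pos hu, Set.indicator_of_mem (mem_Ioi.mpr hu)]
      have hu0 : (0 : ℝ) < u := lt_trans one_pos hu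
      have h1 : (0 : ℝ) ≤ 1 - 1 / u := by
        rw [sub_nonneg, div_le_one hu0]; linarith
      have hkk : (0 : ℝ) ≤ (k : ℝ) * ((k : ℝ) - 1) := by
        have : (2 : ℝ) ≤ (k : ℝ) := by exact_mod_cast hk
        nlinarith
      rw [← ENNReal.ofReal_mul (by positivity)]
      congr 1
      rw [← one_div u]
      have hpow : (1 - 1 / u) ^ (k - 2) * (1 - 1 / u) = (1 - 1 / u) ^ (k - 1) := by
        rw [← pow_succ]
        congr 1
        omega
      calc (k : ℝ) * ((k : ℝ) - 1) / u ^ 3 * (1 - 1 / u) ^ (k - 2) * (1 - 1 / u)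
          = (k : ℝ) * ((k : ℝ) - 1) / u ^ 3 * ((1 - 1 / u) ^ (k - 2) * (1 - 1 / u)) := by ring
        _ = (k : ℝ) * ((k : ℝ) - 1) / u ^ 3 * (1 - 1 / u) ^ (k - 1) := by rw [hpow]
    · rw [if_neg hu, Set.indicator_of_notMem (by simpa using hu)]
      simp
  rw [lintegral_congr hpt, lintegral_indicator measurableSet_Ioi]
  have hnn : 0 ≤ᵐ[volume.restrict (Ioi (1 : ℝ))]
      (fun u : ℝ => (k : ℝ) * ((k : ℝ) - 1) / u ^ 3 * (1 - 1 / u) ^ (k - 1)) := by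
    filter_upwards [ae_restrict_mem measurableSet_Ioi] with u hu
    simp only [mem_Ioi] at hu
    simp only [Pi.zero_apply]
    have hu0 : (0 : ℝ) < u := lt_trans one_pos hu
    have h1 : (0 : ℝ) ≤ 1 - 1 / u := by
      rw [sub_nonneg, div_le_one hu0]; linarith
    have hkk : (0 : ℝ) ≤ (k : ℝ) * ((k : ℝ) - 1) := by
      have : (2 : ℝ) ≤ (k : ℝ) := by exact_mod_cast hk
      nlinarith
    positivity
  rw [← ofReal_integral_eq_lintegral_ofReal (integrableOn_aux k hk) hnn,
    integral_aux k hk]
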